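/- Let u ∈ ℝ^L, let e_k ∈ ℝ^L denote the k-th cardinal basis vector (equal to 1 in its k-th entry and 0 elsewhere), and let A be a P×L real matrix satisfying the restricted isometry property of order ‖u‖₀ + 1 with isometry constant δ ∈ (0,1). Then for every index k ∈ {1, …, L}, |⟨Au, A e_k⟩ − u[k]| ≤ δ‖u‖₂, where u[k] denotes the k-th entry of u. -/
import Mathlib


/-- The number of nonzero entries (the "ℓ₀ norm") of a vector. -/
noncomputable def sparsity {L : ℕ} (x : Fin L → ℝ) : ℕ :=
  (Finset.univ.filter fun i => x i ≠ 0).card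

lemma sparsity_aux {L : ℕ} (x : Fin L → ℝ) (k : Fin L) (c d : ℝ) :
    sparsity (fun i => c * x i + d * (Pi.single k 1 : Fin L → ℝ) i) ≤ sparsity x + 1 := by
  unfold sparsity
  have hsub : (Finset.univ.filter fun i => (c * x i + d * (Pi.single k 1 : Fin L → ℝ) i) ≠ 0) ⊆
      insert k (Finset.univ.filter fun i => x i ≠ 0) := by
    intro i hi
    simp only [Finset.mem_filter, Finset.mem_univ, true_and] at hi
    by_cases hik : i = k
    · simp [hik]
    · simp only [Finset.mem_insert, Finset.mem_filter, Finset.mem_univ, true_and]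
      right
      intro hx
      exact hi (by simp [hx, Pi.single_eq_of_ne hik])
  calc (Finset.univ.filter fun i => (c * x i + d * (Pi.single k 1 : Fin L → ℝ) i) ≠ 0).card
      ≤ (insert k (Finset.univ.filter fun i => x i ≠ 0)).card := Finset.card_le_card hsub
    _ ≤ _ + 1 := Finset.card_insert_le _ _

/-- If a `P × L` real matrix `A` satisfies the restricted isometry
property of order `‖u‖₀ + 1` with isometry constant `δ ∈ (0,1)`, then for every
cardinal basis vector `e_k`, `|⟨Au, A e_k⟩ − u k| ≤ δ ‖u‖₂`. -/
theorem rip_inner_product_basis_estimate {P L : ℕ}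
    (A : Matrix (Fin P) (Fin L) ℝ) (u : Fin L → ℝ) (δ : ℝ)
    (hδ0 : 0 < δ) (hδ1 : δ < 1)
    (hRIP : ∀ η : Fin L → ℝ,
      sparsity η ≤ sparsity u + 1 →
      (1 - δ) * ∑ i, η i ^ 2 ≤ ∑ k, (A.mulVec η k) ^ 2 ∧
        ∑ k, (A.mulVec η k) ^ 2 ≤ (1 + δ) * ∑ i, η i ^ 2) :
    ∀ k : Fin L,
      |(∑ j, A.mulVec u j * A.mulVec (Pi.single k 1) j) - u k| ≤
        δ * Real.sqrt (∑ i, u i ^ 2) := by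
  intro k
  set s : ℝ := ∑ i, u i ^ 2 with hs_def
  have hs0 : 0 ≤ s := Finset.sum_nonneg fun i _ => sq_nonneg _
  by_cases hu : u = 0
  · subst hu
    simp [Matrix.mulVec_zero, Real.sqrt_nonneg, mul_nonneg hδ0.le (Real.sqrt_nonneg _)]
  · have hspos : 0 < s := by
      rcases Function.ne_iff.mp hu with ⟨i, hi⟩
      have : 0 < u i ^ 2 := by
        have h := abs_pos.mpr hi
        nlinarith [sq_abs (u i)]
      exact this.trans_le (Finset.single_le_sum (fun j _ => sq_nonneg (u j)) (Finset.mem_univ i))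
    set t : ℝ := Real.sqrt s with ht_def
    have ht : 0 < t := Real.sqrt_pos.mpr hspos
    have ht2 : t ^ 2 = s := Real.sq_sqrt hs0
    set e : Fin L → ℝ := Pi.single k 1 with he_def
    set a : ℝ := ∑ j, (A.mulVec u j) ^ 2 with ha_def
    set b : ℝ := ∑ j, (A.mulVec e j) ^ 2 with hb_def
    set ip : ℝ := ∑ j, A.mulVec u j * A.mulVec e j with hip_def
    -- basic sums about e
    have he2 : ∑ i, e i ^ 2 = 1 := by
      rw [Finset.sum_eq_single k]
      · simp [he_def]
      · intro i _ hik; simp [he_def, Pi.single_eq_of_ne hik]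
      · simp
    have hue : ∑ i, u i * e i = u k := by
      rw [Finset.sum_eq_single k]
      · simp [he_def]
      · intro i _ hik; simp [he_def, Pi.single_eq_of_ne hik]
      · simp
    -- linearity of mulVec
    have hmul : ∀ d : ℝ, A.mulVec (fun i => t⁻¹ * u i + d * e i) =
        fun j => t⁻¹ * A.mulVec u j + d * A.mulVec e j := by
      intro d
      have : (fun i => t⁻¹ * u i + d * e i) = t⁻¹ • u + d • e := by
        funext i; simp [smul_eq_mul]
      rw [this]
      funext j
      simp [Matrix.mulVec_add, Matrix.mulVec_smul, smul_eq_mul]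
    -- expansions
    have expandA : ∀ d : ℝ, ∑ j, (A.mulVec (fun i => t⁻¹ * u i + d * e i) j) ^ 2 =
        t⁻¹ ^ 2 * a + 2 * t⁻¹ * d * ip + d ^ 2 * b := by
      intro d
      rw [hmul d]
      have : ∀ j : Fin P, (t⁻¹ * A.mulVec u j + d * A.mulVec e j) ^ 2 =
          t⁻¹ ^ 2 * (A.mulVec u j) ^ 2 + 2 * t⁻¹ * d * (A.mulVec u j * A.mulVec e j)
            + d ^ 2 * (A.mulVec e j) ^ 2 := fun j => by ring
      simp only [this]
      rw [Finset.sum_add_distrib, Finset.sum_add_distrib, ← Finset.mul_sum,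
        ← Finset.mul_sum, ← Finset.mul_sum]
    have expandV : ∀ d : ℝ, ∑ i, (t⁻¹ * u i + d * e i) ^ 2 =
        t⁻¹ ^ 2 * s + 2 * t⁻¹ * d * u k + d ^ 2 := by
      intro d
      have : ∀ i : Fin L, (t⁻¹ * u i + d * e i) ^ 2 =
          t⁻¹ ^ 2 * u i ^ 2 + 2 * t⁻¹ * d * (u i * e i) + d ^ 2 * e i ^ 2 := fun i => by ring
      simp only [this]
      rw [Finset.sum_add_distrib, Finset.sum_add_distrib, ← Finset.mul_sum,
        ← Finset.mul_sum, ← Finset.mul_sum, hue, he2, ← hs_def]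
      ring
    -- apply RIP
    have hp := hRIP (fun i => t⁻¹ * u i + 1 * e i) (sparsity_aux u k t⁻¹ 1)
    have hm := hRIP (fun i => t⁻¹ * u i + (-1) * e i) (sparsity_aux u k t⁻¹ (-1))
    rw [expandA 1, expandV 1] at hp
    rw [expandA (-1), expandV (-1)] at hm
    obtain ⟨hp1, hp2⟩ := hp
    obtain ⟨hm1, hm2⟩ := hm
    have hts : t⁻¹ ^ 2 * s = 1 := by
      rw [← ht2]; field_simp
    rw [hts] at hp1 hp2 hm1 hm2
    have htinv : t⁻¹ * t = 1 := inv_mul_cancel₀ ht.ne'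
    -- conclude
    have h1 : t⁻¹ * (u k - ip) ≤ δ := by nlinarith [hp1, hm2]
    have h1' : t⁻¹ * (ip - u k) ≤ δ := by nlinarith [hm1, hp2]
    have key : ∀ x : ℝ, t⁻¹ * x ≤ δ → x ≤ δ * t := by
      intro x hx
      have h3 := mul_le_mul_of_nonneg_left hx ht.le
      calc x = t * (t⁻¹ * x) := by field_simp
        _ ≤ t * δ := h3
        _ = δ * t := mul_comm _ _
    rw [abs_le]
    exact ⟨by linarith [key _ h1], key _ h1'⟩
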